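/- arXiv:0805.2214 — 2 statements merged into one kernel-verified Lean document; each statement's English description precedes it below -/
import Mathlib

section
/- Assume the series X₀ converges almost surely, −∞ < E[log|c(ε₀)|] < 0, and for some μ > 0, E[|c(ε₀)|^μ] < 1 and E[|g(ε₀)|^μ] < ∞. Then there exist α₀ > 0 and, for each 0 < α ≤ α₀, constants C₆ > 0 and ρ > 0 such that for every k ∈ ℤ and every m ≥ 1, P(|X_k − X_{k,m}| > e^{−αm}) ≤ C₆ e^{−ρm}. -/
open MeasureTheory ProbabilityTheory Filter

lemma aux_lintegral_prod_indep {Ω : Type*} [MeasurableSpace Ω] {P : Measure Ω}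
    [IsProbabilityMeasure P] {f : ℤ → Ω → ENNReal}
    (hindep : iIndepFun f P)
    (hmeas : ∀ i, Measurable (f i)) (S : Finset ℤ) :
    ∫⁻ ω, ∏ s ∈ S, f s ω ∂P = ∏ s ∈ S, ∫⁻ ω, f s ω ∂P := by
  classical
  induction S using Finset.induction_on with
  | empty => simp
  | @insert a S ha ih =>
    have hI : IndepFun (∏ j ∈ S, f j) (f a) P :=
      hindep.indepFun_finsetProd_of_notMem hmeas ha
    have hPm : Measurable (∏ j ∈ S, f j) := by
      have : (∏ j ∈ S, f j) = fun ω => ∏ j ∈ S, f j ω := by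
        funext ω; simp [Finset.prod_apply]
      rw [this]
      exact Finset.measurable_prod _ fun i _ => hmeas i
    have key := lintegral_mul_eq_lintegral_mul_lintegral_of_indepFun hPm (hmeas a) hI
    have heq : ∫⁻ ω, ∏ s ∈ insert a S, f s ω ∂P
        = ∫⁻ ω, (∏ j ∈ S, f j) ω * f a ω ∂P := by
      apply lintegral_congr; intro ω
      rw [Finset.prod_insert ha, mul_comm]; simp [Finset.prod_apply]
    have heq2 : ∫⁻ ω, (∏ j ∈ S, f j) ω ∂P = ∫⁻ ω, ∏ s ∈ S, f s ω ∂P := by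
      apply lintegral_congr; intro ω; simp [Finset.prod_apply]
    simp only [Pi.mul_apply] at key
    rw [heq, key, heq2, ih, Finset.prod_insert ha, mul_comm]

lemma aux_ofReal_rpow_sum_le {ι : Type*} (s : Finset ι) (a : ι → ℝ) {p : ℝ}
    (hp : 0 < p) (hp1 : p ≤ 1) :
    ENNReal.ofReal (|∑ i ∈ s, a i| ^ p) ≤ ∑ i ∈ s, ENNReal.ofReal (|a i| ^ p) := by
  classical
  induction s using Finset.induction_on with
  | empty => simp [Real.zero_rpow hp.ne']
  | @insert b s hb ih =>
    rw [Finset.sum_insert hb, Finset.sum_insert hb]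
    calc ENNReal.ofReal (|a b + ∑ i ∈ s, a i| ^ p)
        ≤ ENNReal.ofReal ((|a b| + |∑ i ∈ s, a i|) ^ p) := by
          apply ENNReal.ofReal_le_ofReal
          exact Real.rpow_le_rpow (abs_nonneg _) (abs_add_le _ _) hp.le
      _ = (ENNReal.ofReal (|a b| + |∑ i ∈ s, a i|)) ^ p := by
          rw [ENNReal.ofReal_rpow_of_nonneg (by positivity) hp.le]
      _ = (ENNReal.ofReal (|a b|) + ENNReal.ofReal (|∑ i ∈ s, a i|)) ^ p := by
          rw [ENNReal.ofReal_add (abs_nonneg _) (abs_nonneg _)]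
      _ ≤ (ENNReal.ofReal (|a b|)) ^ p + (ENNReal.ofReal (|∑ i ∈ s, a i|)) ^ p :=
          ENNReal.rpow_add_le_add_rpow _ _ hp.le hp1
      _ = ENNReal.ofReal (|a b| ^ p) + ENNReal.ofReal (|∑ i ∈ s, a i| ^ p) := by
          rw [ENNReal.ofReal_rpow_of_nonneg (abs_nonneg _) hp.le,
            ENNReal.ofReal_rpow_of_nonneg (abs_nonneg _) hp.le]
      _ ≤ ENNReal.ofReal (|a b| ^ p) + ∑ i ∈ s, ENNReal.ofReal (|a i| ^ p) :=
          add_le_add_right ih _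


/-- **Lemma 5.** If `−∞ < E log|c(ε₀)| < 0` and, for some `μ > 0`, `E|c(ε₀)|^μ < 1` and
`E|g(ε₀)|^μ < ∞`, then for all sufficiently small `α > 0` there are constants `C₆, ρ > 0`
with `P(|X_k − X_{k,m}| > e^{−αm}) ≤ C₆ e^{−ρm}` for all `k`, `m ≥ 1`. -/
theorem augmented_garch_exponential_tail_rate
    {Ω : Type*} [MeasurableSpace Ω] (P : Measure Ω) [IsProbabilityMeasure P]
    (ε : ℤ → Ω → ℝ) (c g : ℝ → ℝ)
    (hc : Measurable c) (hg : Measurable g)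
    (hεmeas : ∀ k, Measurable (ε k))
    (hindep : iIndepFun ε P)
    (hident : ∀ k, IdentDistrib (ε k) (ε 0) P P)
    (hlogint : Integrable (fun ω => Real.log |c (ε 0 ω)|) P)
    (hlogneg : ∫ ω, Real.log |c (ε 0 ω)| ∂P < 0)
    (μ : ℝ) (hμ : 0 < μ)
    (hcmom : ∫⁻ ω, ENNReal.ofReal (|c (ε 0 ω)| ^ μ) ∂P < 1)
    (hgmom : ∫⁻ ω, ENNReal.ofReal (|g (ε 0 ω)| ^ μ) ∂P < ⊤)
    (X : ℤ → Ω → ℝ) (hXmeas : ∀ k, Measurable (X k))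
    (hX : ∀ k : ℤ, ∀ᵐ ω ∂P, Tendsto
      (fun m => ∑ i ∈ Finset.range m,
        g (ε (k - (i + 1)) ω) * ∏ j ∈ Finset.range i, c (ε (k - (j + 1)) ω))
      atTop (nhds (X k ω)))
    (Xm : ℤ → ℕ → Ω → ℝ)
    (hXm : ∀ k m ω, Xm k m ω = ∑ i ∈ Finset.range m,
      g (ε (k - (i + 1)) ω) * ∏ j ∈ Finset.range i, c (ε (k - (j + 1)) ω)) :
    ∃ α₀ > (0 : ℝ), ∀ α : ℝ, 0 < α → α ≤ α₀ →
      ∃ C₆ > (0 : ℝ), ∃ ρ > (0 : ℝ), ∀ k : ℤ, ∀ m : ℕ, 1 ≤ m →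
        P {ω | |X k ω - Xm k m ω| > Real.exp (-α * m)} ≤
          ENNReal.ofReal (C₆ * Real.exp (-ρ * m)) := by
  classical
  set p := min μ 1 with hpdef
  have hp : 0 < p := lt_min hμ one_pos
  have hp1 : p ≤ 1 := min_le_right _ _
  have hpμ : p ≤ μ := min_le_left _ _
  have hrpowc : Continuous (fun t : ℝ => t ^ p) := Real.continuous_rpow_const hp.le
  set C' : ENNReal := ∫⁻ ω, ENNReal.ofReal (|c (ε 0 ω)| ^ p) ∂P with hC'def
  set G' : ENNReal := ∫⁻ ω, ENNReal.ofReal (|g (ε 0 ω)| ^ p) ∂P with hG'def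
  -- Step A
  have hC'lt : C' < 1 := by
    set F : Ω → ℝ := fun ω => |c (ε 0 ω)| with hFdef
    have hFm : Measurable F := (hc.comp (hεmeas 0)).abs
    have hle : eLpNorm F (ENNReal.ofReal p) P ≤ eLpNorm F (ENNReal.ofReal μ) P :=
      eLpNorm_le_eLpNorm_of_exponent_le (ENNReal.ofReal_le_ofReal hpμ)
        hFm.aestronglyMeasurable
    have hnorm : ∀ (q : ℝ), 0 < q → eLpNorm F (ENNReal.ofReal q) P
        = (∫⁻ ω, ENNReal.ofReal (|c (ε 0 ω)| ^ q) ∂P) ^ (1/q) := by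
      intro q hq
      rw [eLpNorm_eq_lintegral_rpow_enorm_toReal
        (by simp [ENNReal.ofReal_eq_zero, not_le, hq]) ENNReal.ofReal_ne_top,
        ENNReal.toReal_ofReal hq.le]
      congr 1
      apply lintegral_congr
      intro ω
      rw [hFdef]
      rw [Real.enorm_eq_ofReal_abs, abs_abs,
        ENNReal.ofReal_rpow_of_nonneg (abs_nonneg _) hq.le]
    rw [hnorm p hp, hnorm μ hμ] at hle
    have h2 : ((C') ^ (1/p)) ^ p = C' := by
      rw [← ENNReal.rpow_mul, one_div_mul_cancel hp.ne', ENNReal.rpow_one]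
    calc C' = ((C') ^ (1/p)) ^ p := h2.symm
      _ ≤ (((∫⁻ ω, ENNReal.ofReal (|c (ε 0 ω)| ^ μ) ∂P) ^ (1/μ))) ^ p :=
          ENNReal.rpow_le_rpow hle hp.le
      _ < 1 := ENNReal.rpow_lt_one (ENNReal.rpow_lt_one hcmom (by positivity)) hp
  -- Step B
  have hG'lt : G' < ⊤ := by
    have hb : ∀ ω, ENNReal.ofReal (|g (ε 0 ω)| ^ p)
        ≤ ENNReal.ofReal (|g (ε 0 ω)| ^ μ) + 1 := by
      intro ω
      rcases le_or_gt (|g (ε 0 ω)|) 1 with h|h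
      · calc ENNReal.ofReal (|g (ε 0 ω)| ^ p) ≤ ENNReal.ofReal 1 :=
            ENNReal.ofReal_le_ofReal (Real.rpow_le_one (abs_nonneg _) h hp.le)
          _ ≤ _ := by simp
      · exact le_trans (ENNReal.ofReal_le_ofReal
          (Real.rpow_le_rpow_of_exponent_le h.le hpμ)) le_self_add
    calc G' ≤ ∫⁻ ω, (ENNReal.ofReal (|g (ε 0 ω)| ^ μ) + 1) ∂P := lintegral_mono hb
      _ = (∫⁻ ω, ENNReal.ofReal (|g (ε 0 ω)| ^ μ) ∂P) + 1 := by
          rw [lintegral_add_right _ measurable_const]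
          simp
      _ < ⊤ := ENNReal.add_lt_top.mpr ⟨hgmom, ENNReal.one_lt_top⟩
  -- term
  set term : ℤ → ℕ → Ω → ℝ := fun k i ω =>
    g (ε (k - (i + 1)) ω) * ∏ j ∈ Finset.range i, c (ε (k - (j + 1)) ω) with htermdef
  have htermmeas : ∀ k i, Measurable (term k i) := by
    intro k i
    exact ((hg.comp (hεmeas _)).mul
      (Finset.measurable_prod _ fun j _ => hc.comp (hεmeas _)))
  -- Step C
  have hterm : ∀ (k : ℤ) (i : ℕ),
      ∫⁻ ω, ENNReal.ofReal (|term k i ω| ^ p) ∂P = G' * C' ^ i := by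
    intro k i
    have hgm : Measurable (fun x : ℝ => ENNReal.ofReal (|g x| ^ p)) :=
      ENNReal.measurable_ofReal.comp (hrpowc.measurable.comp hg.abs)
    have hcm : Measurable (fun x : ℝ => ENNReal.ofReal (|c x| ^ p)) :=
      ENNReal.measurable_ofReal.comp (hrpowc.measurable.comp hc.abs)
    set H : ℤ → ℝ → ENNReal := fun s x =>
      if s = k - ((i : ℤ) + 1) then ENNReal.ofReal (|g x| ^ p)
      else ENNReal.ofReal (|c x| ^ p) with hHdef
    have hHmeas : ∀ s, Measurable (H s) := by
      intro s
      simp only [hHdef]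
      split_ifs
      · exact hgm
      · exact hcm
    set F : ℤ → Ω → ENNReal := fun s ω => H s (ε s ω) with hFdef
    have hFmeas : ∀ s, Measurable (F s) := fun s => (hHmeas s).comp (hεmeas s)
    have hFindep : iIndepFun F P := hindep.comp H hHmeas
    set T : Finset ℤ := (Finset.range i).image (fun j : ℕ => k - ((j : ℤ) + 1)) with hTdef
    have hnm : k - ((i : ℤ) + 1) ∉ T := by
      simp only [hTdef, Finset.mem_image, Finset.mem_range, not_exists]
      intro j
      intro hj
      omega
    have hident' : ∀ (s : ℤ) (u : ℝ → ENNReal), Measurable u →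
        ∫⁻ ω, u (ε s ω) ∂P = ∫⁻ ω, u (ε 0 ω) ∂P := by
      intro s u hu
      exact ((hident s).comp hu).lintegral_eq
    have hpt : ∀ ω, ENNReal.ofReal (|term k i ω| ^ p)
        = F (k - ((i : ℤ) + 1)) ω * ∏ j ∈ Finset.range i, F (k - ((j : ℤ) + 1)) ω := by
      intro ω
      have h1 : |term k i ω| = |g (ε (k - ((i : ℤ) + 1)) ω)|
          * ∏ j ∈ Finset.range i, |c (ε (k - ((j : ℤ) + 1)) ω)| := by
        simp only [htermdef, abs_mul, Finset.abs_prod]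
      rw [h1, Real.mul_rpow (abs_nonneg _) (Finset.prod_nonneg fun j _ => abs_nonneg _),
        ← Real.finset_prod_rpow _ _ (fun j _ => abs_nonneg _),
        ENNReal.ofReal_mul (Real.rpow_nonneg (abs_nonneg _) _),
        ENNReal.ofReal_prod_of_nonneg (fun j _ => Real.rpow_nonneg (abs_nonneg _) _)]
      congr 1
      · simp only [hFdef, hHdef, if_pos rfl]
      · apply Finset.prod_congr rfl
        intro j hj
        have hne : (k - ((j : ℤ) + 1) : ℤ) ≠ k - ((i : ℤ) + 1) := by
          simp only [Finset.mem_range] at hj; omega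
        simp only [hFdef, hHdef, if_neg hne]
    have hTprodmeas : Measurable (∏ s ∈ T, F s) := by
      have : (∏ s ∈ T, F s) = fun ω => ∏ s ∈ T, F s ω := by
        funext ω; simp [Finset.prod_apply]
      rw [this]
      exact Finset.measurable_prod _ fun s _ => hFmeas s
    have hinj : Set.InjOn (fun j : ℕ => k - ((j : ℤ) + 1)) (Finset.range i) := by
      intro j1 _ j2 _ h
      have h' : k - ((j1 : ℤ) + 1) = k - ((j2 : ℤ) + 1) := h
      omega
    calc ∫⁻ ω, ENNReal.ofReal (|term k i ω| ^ p) ∂P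
        = ∫⁻ ω, (∏ s ∈ T, F s) ω * F (k - ((i : ℤ) + 1)) ω ∂P := by
          apply lintegral_congr; intro ω
          rw [hpt ω, mul_comm]
          congr 1
          rw [Finset.prod_apply, hTdef, Finset.prod_image hinj]
      _ = (∫⁻ ω, (∏ s ∈ T, F s) ω ∂P) * ∫⁻ ω, F (k - ((i : ℤ) + 1)) ω ∂P := by
          have h := lintegral_mul_eq_lintegral_mul_lintegral_of_indepFun
            hTprodmeas (hFmeas _)
            (hFindep.indepFun_finsetProd_of_notMem hFmeas hnm)
          simpa only [Pi.mul_apply] using h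
      _ = (∏ s ∈ T, ∫⁻ ω, F s ω ∂P) * G' := by
          congr 1
          · rw [show ∫⁻ ω, (∏ s ∈ T, F s) ω ∂P = ∫⁻ ω, ∏ s ∈ T, F s ω ∂P from
              lintegral_congr (fun ω => by simp [Finset.prod_apply])]
            exact aux_lintegral_prod_indep hFindep hFmeas T
          · have hFg : F (k - ((i : ℤ) + 1))
                = fun ω => ENNReal.ofReal (|g (ε (k - ((i : ℤ) + 1)) ω)| ^ p) := by
              funext ω; simp only [hFdef, hHdef, if_pos rfl]
            rw [hFg]
            exact hident' _ (fun x => ENNReal.ofReal (|g x| ^ p)) hgm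
      _ = G' * C' ^ i := by
          have hCs : ∀ s ∈ T, ∫⁻ ω, F s ω ∂P = C' := by
            intro s hs
            have hsne : s ≠ k - ((i : ℤ) + 1) := by
              rintro rfl; exact hnm hs
            have hFc : F s = fun ω => ENNReal.ofReal (|c (ε s ω)| ^ p) := by
              funext ω; simp only [hFdef, hHdef, if_neg hsne]
            rw [hFc]
            exact hident' _ (fun x => ENNReal.ofReal (|c x| ^ p)) hcm
          rw [Finset.prod_congr rfl hCs, Finset.prod_const, hTdef,
            Finset.card_image_of_injOn hinj, Finset.card_range, mul_comm]
  -- Step D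
  have htail : ∀ (k : ℤ) (m : ℕ),
      ∫⁻ ω, ENNReal.ofReal (|X k ω - Xm k m ω| ^ p) ∂P
        ≤ G' * (1 - C')⁻¹ * C' ^ m := by
    intro k m
    have hae : ∀ᵐ ω ∂P, ENNReal.ofReal (|X k ω - Xm k m ω| ^ p)
        ≤ ∑' i : ℕ, ENNReal.ofReal (|term k (m + i) ω| ^ p) := by
      filter_upwards [hX k] with ω hω
      have hS : Tendsto (fun n => ∑ i ∈ Finset.range n, term k i ω) atTop
          (nhds (X k ω)) := hω
      have hXmω : Xm k m ω = ∑ i ∈ Finset.range m, term k i ω := hXm k m ω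
      have h1 : Tendsto (fun n => ENNReal.ofReal
          (|∑ i ∈ Finset.range n, term k i ω - Xm k m ω| ^ p)) atTop
          (nhds (ENNReal.ofReal (|X k ω - Xm k m ω| ^ p))) := by
        apply (ENNReal.continuous_ofReal.tendsto _).comp
        apply (hrpowc.tendsto _).comp
        exact (hS.sub_const _).abs
      refine le_of_tendsto h1 ?_
      filter_upwards [eventually_ge_atTop m] with n hn
      have h2 : ∑ i ∈ Finset.range n, term k i ω - Xm k m ω
          = ∑ i ∈ Finset.Ico m n, term k i ω := by
        rw [hXmω, Finset.sum_Ico_eq_sub _ hn]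
      rw [h2]
      calc ENNReal.ofReal (|∑ i ∈ Finset.Ico m n, term k i ω| ^ p)
          ≤ ∑ i ∈ Finset.Ico m n, ENNReal.ofReal (|term k i ω| ^ p) :=
            aux_ofReal_rpow_sum_le _ _ hp hp1
        _ = ∑ i ∈ Finset.range (n - m), ENNReal.ofReal (|term k (m + i) ω| ^ p) := by
            rw [Finset.sum_Ico_eq_sum_range]
        _ ≤ ∑' i : ℕ, ENNReal.ofReal (|term k (m + i) ω| ^ p) := ENNReal.sum_le_tsum _
    calc ∫⁻ ω, ENNReal.ofReal (|X k ω - Xm k m ω| ^ p) ∂P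
        ≤ ∫⁻ ω, ∑' i : ℕ, ENNReal.ofReal (|term k (m + i) ω| ^ p) ∂P :=
          lintegral_mono_ae hae
      _ = ∑' i : ℕ, ∫⁻ ω, ENNReal.ofReal (|term k (m + i) ω| ^ p) ∂P :=
          lintegral_tsum (fun i => (ENNReal.measurable_ofReal.comp
            (hrpowc.measurable.comp (htermmeas k (m+i)).abs)).aemeasurable)
      _ = ∑' i : ℕ, G' * C' ^ (m + i) := by
          exact tsum_congr fun i => hterm k (m + i)
      _ = G' * (1 - C')⁻¹ * C' ^ m := by
          simp_rw [pow_add]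
          rw [ENNReal.tsum_mul_left]
          rw [ENNReal.tsum_mul_left]
          rw [ENNReal.tsum_geometric]
          ring
  -- constants
  have hC'top : C' ≠ ⊤ := (hC'lt.trans ENNReal.one_lt_top).ne
  have hsubne : (1 : ENNReal) - C' ≠ 0 := by
    simp only [ne_eq, tsub_eq_zero_iff_le, not_le]
    exact hC'lt
  have hfin : G' * (1 - C')⁻¹ ≠ ⊤ :=
    ENNReal.mul_ne_top hG'lt.ne (ENNReal.inv_ne_top.mpr hsubne)
  set K := (G' * (1 - C')⁻¹).toReal with hKdef
  have hKeq : G' * (1 - C')⁻¹ = ENNReal.ofReal K := (ENNReal.ofReal_toReal hfin).symm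
  have hK0 : 0 ≤ K := ENNReal.toReal_nonneg
  set r := max C'.toReal (Real.exp (-1)) with hrdef
  have hr0 : 0 < r := lt_max_of_lt_right (Real.exp_pos _)
  have hr1 : r < 1 := by
    apply max_lt
    · exact (ENNReal.toReal_lt_toReal hC'top ENNReal.one_ne_top).mpr hC'lt
    · exact Real.exp_lt_one_iff.mpr (by norm_num)
  have hCr : C' ≤ ENNReal.ofReal r := by
    rw [← ENNReal.ofReal_toReal hC'top]
    exact ENNReal.ofReal_le_ofReal (le_max_left _ _)
  have hlogr : Real.log r < 0 := Real.log_neg hr0 hr1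
  refine ⟨-Real.log r / (2 * p), div_pos (neg_pos.mpr hlogr) (by positivity), ?_⟩
  intro α hα hαle
  refine ⟨K + 1, by positivity, -Real.log r - α * p, ?_, ?_⟩
  · have hαp : α * p ≤ -Real.log r / 2 := by
      have h1 : α * p ≤ (-Real.log r / (2 * p)) * p :=
        mul_le_mul_of_nonneg_right hαle hp.le
      have h2 : (-Real.log r / (2 * p)) * p = -Real.log r / 2 := by
        field_simp
      linarith
    have : 0 < -Real.log r := by linarith
    linarith
  intro k m hm
  set β := Real.exp (-α * (m : ℝ)) with hβdef
  have hβpos : 0 < β := Real.exp_pos _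
  have hXmm : Measurable (Xm k m) := by
    have : Xm k m = fun ω => ∑ i ∈ Finset.range m, term k i ω := funext (hXm k m)
    rw [this]
    exact Finset.measurable_sum _ fun i _ => htermmeas k i
  have hfmeas : Measurable (fun ω => ENNReal.ofReal (|X k ω - Xm k m ω| ^ p)) :=
    ENNReal.measurable_ofReal.comp (hrpowc.measurable.comp ((hXmeas k).sub hXmm).abs)
  have hsub : {ω | |X k ω - Xm k m ω| > β}
      ⊆ {ω | ENNReal.ofReal (β ^ p) ≤ ENNReal.ofReal (|X k ω - Xm k m ω| ^ p)} := by
    intro ω hω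
    exact ENNReal.ofReal_le_ofReal (Real.rpow_le_rpow hβpos.le (le_of_lt hω) hp.le)
  have hne0 : ENNReal.ofReal (β ^ p) ≠ 0 := by
    simp only [ne_eq, ENNReal.ofReal_eq_zero, not_le]
    positivity
  have markov := meas_ge_le_lintegral_div (μ := P) hfmeas.aemeasurable (ε := ENNReal.ofReal (β ^ p)) hne0 ENNReal.ofReal_ne_top
  have hβp : β ^ p = Real.exp (-α * (m : ℝ) * p) := by
    rw [hβdef, ← Real.exp_mul]
  have hinv : (ENNReal.ofReal (β ^ p))⁻¹ = ENNReal.ofReal (Real.exp (α * (m : ℝ) * p)) := by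
    rw [hβp, ← ENNReal.ofReal_inv_of_pos (Real.exp_pos _), ← Real.exp_neg]
    ring_nf
  have hCm : C' ^ m ≤ ENNReal.ofReal (r ^ m) := by
    rw [ENNReal.ofReal_pow hr0.le]
    exact pow_le_pow_left' hCr m
  have hrm : r ^ m = Real.exp (Real.log r * (m : ℝ)) := by
    rw [mul_comm, Real.exp_nat_mul, Real.exp_log hr0]
  calc P {ω | |X k ω - Xm k m ω| > β}
      ≤ P {ω | ENNReal.ofReal (β ^ p) ≤ ENNReal.ofReal (|X k ω - Xm k m ω| ^ p)} :=
        measure_mono hsub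
    _ ≤ (∫⁻ ω, ENNReal.ofReal (|X k ω - Xm k m ω| ^ p) ∂P) / ENNReal.ofReal (β ^ p) :=
        markov
    _ ≤ (G' * (1 - C')⁻¹ * C' ^ m) / ENNReal.ofReal (β ^ p) :=
        ENNReal.div_le_div_right (htail k m) _
    _ = (G' * (1 - C')⁻¹) * C' ^ m * (ENNReal.ofReal (β ^ p))⁻¹ := by
        rw [div_eq_mul_inv]
    _ ≤ ENNReal.ofReal K * ENNReal.ofReal (r ^ m)
        * ENNReal.ofReal (Real.exp (α * (m : ℝ) * p)) := by
        rw [hKeq, hinv]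
        exact mul_le_mul' (mul_le_mul' le_rfl hCm) le_rfl
    _ = ENNReal.ofReal (K * r ^ m * Real.exp (α * (m : ℝ) * p)) := by
        rw [ENNReal.ofReal_mul (mul_nonneg hK0 (by positivity)), ENNReal.ofReal_mul hK0]
    _ ≤ ENNReal.ofReal ((K + 1) * Real.exp (-(-Real.log r - α * p) * (m : ℝ))) := by
        apply ENNReal.ofReal_le_ofReal
        rw [hrm, mul_assoc, ← Real.exp_add]
        have hexp : Real.log r * (m : ℝ) + α * (m : ℝ) * p
            = -(-Real.log r - α * p) * (m : ℝ) := by ring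
        rw [hexp]
        exact mul_le_mul_of_nonneg_right (by linarith) (Real.exp_nonneg _)
end

section
/- Assume the series X₀ converges almost surely, −∞ < E[log|c(ε₀)|] < 0, and for some μ > 0, E[|c(ε₀)|^μ] < 1 and E[|g(ε₀)|^μ] < ∞. Then there exist α₀ > 0 and, for each 0 < α ≤ α₀, a constant C₈ such that for every k ∈ ℤ and every m ≥ 1, P(|η_k − η_{k,m}| > e^{−αm}) ≤ P(|ε₀| ≥ e^{αm}) + C₈ m^{−μ}. -/
open MeasureTheory ProbabilityTheory Filter
open scoped ENNReal NNReal

private lemma aux_exp_key (x : ℝ) : Real.exp x - 1 ≤ x * Real.exp x := by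
  have h := Real.add_one_le_exp (-x)
  have h3 := mul_le_mul_of_nonneg_right h (Real.exp_pos x).le
  rw [← Real.exp_add, neg_add_cancel, Real.exp_zero] at h3
  nlinarith

private lemma aux_exp_sub_exp (a b : ℝ) :
    |Real.exp a - Real.exp b| ≤ Real.exp (max a b) * |a - b| := by
  wlog h : b ≤ a generalizing a b
  · have := this b a (le_of_not_ge h)
    rwa [abs_sub_comm, max_comm, abs_sub_comm b a] at this
  rw [max_eq_left h, abs_of_nonneg (sub_nonneg.2 (Real.exp_le_exp.2 h)),
    abs_of_nonneg (sub_nonneg.2 h)]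
  have hba : Real.exp b * Real.exp (a - b) = Real.exp a := by
    rw [← Real.exp_add]; ring_nf
  nlinarith [aux_exp_key (a - b), (Real.exp_pos b).le, Real.exp_pos (a - b)]

private lemma aux_sign_mul {t : ℝ} (ht : 0 < t) (e : ℝ) :
    Real.sign (t * e) = Real.sign e := by
  rcases lt_trichotomy e 0 with h | h | h
  · rw [Real.sign_of_neg h, Real.sign_of_neg (mul_neg_of_pos_of_neg ht h)]
  · simp [h]
  · rw [Real.sign_of_pos h, Real.sign_of_pos (mul_pos ht h)]

private lemma aux_abs_sign (e : ℝ) : |Real.sign e| ≤ 1 := by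
  rcases lt_trichotomy e 0 with h | h | h
  · rw [Real.sign_of_neg h]; simp
  · simp [h]
  · rw [Real.sign_of_pos h]; simp

private lemma aux_exp_rpow (a y : ℝ) : (Real.exp a) ^ y = Real.exp (a * y) := by
  rw [Real.rpow_def_of_pos (Real.exp_pos a), Real.log_exp]

private lemma aux_prod_rpow {ι : Type*} (s : Finset ι) (f : ι → ℝ≥0∞) {p : ℝ} (hp : 0 ≤ p) :
    (∏ i ∈ s, f i) ^ p = ∏ i ∈ s, f i ^ p := by
  classical
  induction s using Finset.cons_induction with
  | empty => simp
  | cons a s ha ih =>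
    rw [Finset.prod_cons, Finset.prod_cons, ENNReal.mul_rpow_of_nonneg _ _ hp, ih]

private lemma aux_sum_rpow_le {ι : Type*} (s : Finset ι) (f : ι → ℝ≥0∞) {p : ℝ}
    (hp0 : 0 < p) (hp1 : p ≤ 1) :
    (∑ i ∈ s, f i) ^ p ≤ ∑ i ∈ s, f i ^ p := by
  classical
  induction s using Finset.cons_induction with
  | empty => simp [ENNReal.zero_rpow_of_pos hp0]
  | cons a s ha ih =>
    rw [Finset.sum_cons, Finset.sum_cons]
    exact (ENNReal.rpow_add_le_add_rpow _ _ hp0.le hp1).trans (add_le_add le_rfl ih)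

private lemma aux_minkowski {Ω : Type*} [MeasurableSpace Ω] (P : Measure Ω) {p : ℝ} (hp : 1 ≤ p)
    (f : ℕ → Ω → ℝ≥0∞) (hf : ∀ i, Measurable (f i)) (n : ℕ) :
    (∫⁻ ω, (∑ i ∈ Finset.range n, f i ω) ^ p ∂P) ^ (1/p) ≤
      ∑ i ∈ Finset.range n, (∫⁻ ω, f i ω ^ p ∂P) ^ (1/p) := by
  have hp0 : 0 < p := lt_of_lt_of_le one_pos hp
  induction n with
  | zero =>
    simp only [Finset.range_zero, Finset.sum_empty]
    rw [ENNReal.zero_rpow_of_pos hp0, lintegral_zero,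
      ENNReal.zero_rpow_of_pos (by positivity : (0:ℝ) < 1/p)]
  | succ n ih =>
    have hsum : Measurable fun ω => ∑ i ∈ Finset.range n, f i ω :=
      Finset.measurable_sum _ fun i _ => hf i
    have key := ENNReal.lintegral_Lp_add_le (μ := P)
      (f := fun ω => ∑ i ∈ Finset.range n, f i ω)
      (g := f n) hsum.aemeasurable (hf n).aemeasurable hp
    calc (∫⁻ ω, (∑ i ∈ Finset.range (n+1), f i ω) ^ p ∂P) ^ (1/p)
        = (∫⁻ ω, (((fun ω => ∑ i ∈ Finset.range n, f i ω) + f n) ω) ^ p ∂P) ^ (1/p) := by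
          congr 1; apply lintegral_congr; intro ω
          simp [Finset.sum_range_succ, Pi.add_apply]
      _ ≤ (∫⁻ ω, (∑ i ∈ Finset.range n, f i ω) ^ p ∂P) ^ (1/p)
            + (∫⁻ ω, f n ω ^ p ∂P) ^ (1/p) := key
      _ ≤ _ := by
          rw [Finset.sum_range_succ]
          exact add_le_add ih le_rfl

private lemma aux_iIndepFun_comp_inj {Ω ι κ : Type*} [MeasurableSpace Ω] {P : Measure Ω}
    {β : Type*} {mβ : MeasurableSpace β} {f : ι → Ω → β}
    (h : iIndepFun (m := fun _ => mβ) f P) (u : κ → ι) (hu : Function.Injective u) :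
    iIndepFun (m := fun _ => mβ) (fun j => f (u j)) P := by
  classical
  rw [iIndepFun_iff_measure_inter_preimage_eq_mul] at h ⊢
  intro S sets hmeas
  set sets' : ι → Set β := fun i => ⋂ j ∈ S.filter fun j' => u j' = i, sets j with hsets'
  have hkey : ∀ j ∈ S, sets' (u j) = sets j := by
    intro j hj
    have hfil : (S.filter fun j' => u j' = u j) = {j} := by
      ext j'
      simp only [Finset.mem_filter, Finset.mem_singleton]
      constructor
      · rintro ⟨_, hjj⟩; exact hu hjj
      · rintro rfl; exact ⟨hj, rfl⟩
    simp only [hsets', hfil]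
    simp
  have hmeas' : ∀ i, i ∈ S.image u → MeasurableSet (sets' i) := by
    intro i _
    apply MeasurableSet.biInter (Finset.countable_toSet _)
    intro j hj
    exact hmeas j (Finset.mem_of_mem_filter j hj)
  have h2 := h (S.image u) hmeas'
  have hInter : (⋂ i ∈ S.image u, f i ⁻¹' sets' i) = ⋂ j ∈ S, f (u j) ⁻¹' sets j := by
    ext x
    simp only [Set.mem_iInter, Finset.mem_image, Set.mem_preimage]
    constructor
    · intro hx j hj
      have := hx (u j) ⟨j, hj, rfl⟩
      rwa [hkey j hj] at this
    · rintro hx i ⟨j, hj, rfl⟩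
      rw [hkey j hj]
      exact hx j hj
  have hProd : (∏ i ∈ S.image u, P (f i ⁻¹' sets' i)) = ∏ j ∈ S, P (f (u j) ⁻¹' sets j) := by
    rw [Finset.prod_image (fun a _ b _ hab => hu hab)]
    exact Finset.prod_congr rfl fun j hj => by rw [hkey j hj]
  rw [hInter, hProd] at h2
  exact h2

private lemma aux_moment {Ω : Type*} [MeasurableSpace Ω] (P : Measure Ω) [IsProbabilityMeasure P]
    (ε : ℤ → Ω → ℝ) (c g : ℝ → ℝ) (hc : Measurable c) (hg : Measurable g)
    (hεmeas : ∀ k, Measurable (ε k))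
    (hindep : iIndepFun ε P)
    (hident : ∀ k, IdentDistrib (ε k) (ε 0) P P)
    (μ : ℝ) (k : ℤ) (i : ℕ) :
    ∫⁻ ω, ((ENNReal.ofReal |g (ε (k - (i+1)) ω)|) ^ μ *
        ∏ j ∈ Finset.range i, (ENNReal.ofReal |c (ε (k - (j+1)) ω)|) ^ μ) ∂P
      = (∫⁻ ω, (ENNReal.ofReal |g (ε 0 ω)|) ^ μ ∂P) *
        (∫⁻ ω, (ENNReal.ofReal |c (ε 0 ω)|) ^ μ ∂P) ^ i := by
  classical
  set φc : ℝ → ℝ≥0∞ := fun x => (ENNReal.ofReal |c x|) ^ μ with hφc_def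
  set φg : ℝ → ℝ≥0∞ := fun x => (ENNReal.ofReal |g x|) ^ μ with hφg_def
  have hφc : Measurable φc :=
    ENNReal.continuous_rpow_const.measurable.comp (ENNReal.measurable_ofReal.comp hc.abs)
  have hφg : Measurable φg :=
    ENNReal.continuous_rpow_const.measurable.comp (ENNReal.measurable_ofReal.comp hg.abs)
  have hu : Function.Injective fun j : ℕ => k - ((j : ℤ) + 1) := by
    intro a b hab; dsimp only at hab; omega
  have hε' : iIndepFun (fun j : ℕ => ε (k - ((j : ℤ) + 1))) P :=
    aux_iIndepFun_comp_inj hindep _ hu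
  have hid : ∀ (φ : ℝ → ℝ≥0∞), Measurable φ → ∀ j : ℤ,
      ∫⁻ ω, φ (ε j ω) ∂P = ∫⁻ ω, φ (ε 0 ω) ∂P := fun φ hφ j =>
    ((hident j).comp hφ).lintegral_eq
  set F : ℕ → Ω → ℝ≥0∞ := fun j => φc ∘ fun ω => ε (k - ((j : ℤ) + 1)) ω with hF_def
  have hFmeas : ∀ j, Measurable (F j) := fun j => hφc.comp (hεmeas _)
  have hFind : iIndepFun F P := hε'.comp _ fun _ => hφc
  have hprodint : ∀ n : ℕ,
      ∫⁻ ω, ∏ j ∈ Finset.range n, F j ω ∂P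
        = (∫⁻ ω, φc (ε 0 ω) ∂P) ^ n := by
    intro n
    induction n with
    | zero => simp
    | succ n ih =>
      have hIndep := hFind.indepFun_prod_range_succ hFmeas n
      have hmeasP : Measurable (∏ j ∈ Finset.range n, F j) := by
        rw [Finset.prod_fn]
        exact Finset.measurable_prod _ fun j _ => hFmeas j
      have := lintegral_mul_eq_lintegral_mul_lintegral_of_indepFun hmeasP (hFmeas n) hIndep
      calc ∫⁻ ω, ∏ j ∈ Finset.range (n+1), F j ω ∂P
          = ∫⁻ ω, ((∏ j ∈ Finset.range n, F j) * F n) ω ∂P := by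
            apply lintegral_congr; intro ω
            simp [Finset.prod_range_succ]
        _ = (∫⁻ ω, (∏ j ∈ Finset.range n, F j) ω ∂P) * ∫⁻ ω, F n ω ∂P := this
        _ = (∫⁻ ω, φc (ε 0 ω) ∂P) ^ (n+1) := by
            rw [show (∫⁻ ω, (∏ j ∈ Finset.range n, F j) ω ∂P)
                = ∫⁻ ω, ∏ j ∈ Finset.range n, F j ω ∂P from
              lintegral_congr fun ω => by simp, ih, pow_succ]
            congr 1
            exact hid φc hφc _
  set H : ℕ → Ω → ℝ≥0∞ :=
    fun j => (if j = i then φg else φc) ∘ fun ω => ε (k - ((j : ℤ) + 1)) ω with hH_def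
  have hHφmeas : ∀ j, Measurable (if j = i then φg else φc) := by
    intro j; split <;> assumption
  have hHmeas : ∀ j, Measurable (H j) := fun j => (hHφmeas j).comp (hεmeas _)
  have hHind : iIndepFun H P := hε'.comp _ hHφmeas
  have hIndep2 : IndepFun (∏ j ∈ Finset.range i, H j) (H i) P :=
    hHind.indepFun_finset_prod_of_notMem hHmeas Finset.notMem_range_self
  have hmeasP2 : Measurable (∏ j ∈ Finset.range i, H j) := by
    rw [Finset.prod_fn]
    exact Finset.measurable_prod _ fun j _ => hHmeas j
  have hmul := lintegral_mul_eq_lintegral_mul_lintegral_of_indepFun hmeasP2 (hHmeas i) hIndep2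
  have hHeq : ∀ j ∈ Finset.range i, ∀ ω, H j ω = F j ω := by
    intro j hj ω
    have : j ≠ i := Nat.ne_of_lt (Finset.mem_range.1 hj)
    simp [hH_def, hF_def, this]
  calc ∫⁻ ω, (φg (ε (k - ((i : ℤ) + 1)) ω) * ∏ j ∈ Finset.range i, φc (ε (k - ((j : ℤ) + 1)) ω)) ∂P
      = ∫⁻ ω, ((∏ j ∈ Finset.range i, H j) * H i) ω ∂P := by
        apply lintegral_congr; intro ω
        simp only [Pi.mul_apply, Finset.prod_apply]
        rw [mul_comm]
        congr 1
        · exact Finset.prod_congr rfl fun j hj => (hHeq j hj ω).symm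
        · simp [hH_def]
    _ = (∫⁻ ω, (∏ j ∈ Finset.range i, H j) ω ∂P) * ∫⁻ ω, H i ω ∂P := hmul
    _ = _ := by
        have h1 : (∫⁻ ω, (∏ j ∈ Finset.range i, H j) ω ∂P)
            = (∫⁻ ω, φc (ε 0 ω) ∂P) ^ i := by
          rw [show (∫⁻ ω, (∏ j ∈ Finset.range i, H j) ω ∂P)
              = ∫⁻ ω, ∏ j ∈ Finset.range i, F j ω ∂P from
            lintegral_congr fun ω => by
              simp only [Finset.prod_apply]
              exact Finset.prod_congr rfl fun j hj => hHeq j hj ω]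
          exact hprodint i
        have h2 : (∫⁻ ω, H i ω ∂P) = ∫⁻ ω, φg (ε 0 ω) ∂P := by
          rw [show (∫⁻ ω, H i ω ∂P) = ∫⁻ ω, φg (ε (k - ((i : ℤ) + 1)) ω) ∂P from
            lintegral_congr fun ω => by simp [hH_def]]
          exact hid φg hφg _
        rw [h1, h2, mul_comm]

private lemma aux_series_moment {Ω : Type*} [MeasurableSpace Ω] (P : Measure Ω)
    [IsProbabilityMeasure P]
    (ε : ℤ → Ω → ℝ) (c g : ℝ → ℝ) (hc : Measurable c) (hg : Measurable g)
    (hεmeas : ∀ k, Measurable (ε k))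
    (hindep : iIndepFun ε P)
    (hident : ∀ k, IdentDistrib (ε k) (ε 0) P P)
    (μ : ℝ) (hμ : 0 < μ)
    (T : ℤ → ℕ → Ω → ℝ≥0∞)
    (hT : ∀ k i ω, T k i ω = ENNReal.ofReal |g (ε (k - (i+1)) ω)| *
      ∏ j ∈ Finset.range i, ENNReal.ofReal |c (ε (k - (j+1)) ω)|)
    (hρ : (∫⁻ ω, (ENNReal.ofReal |c (ε 0 ω)|) ^ μ ∂P) < 1)
    (hG : (∫⁻ ω, (ENNReal.ofReal |g (ε 0 ω)|) ^ μ ∂P) < ⊤) :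
    ∃ K : ℝ≥0∞, K ≠ ⊤ ∧ ∀ k : ℤ, ∀ m : ℕ,
      ∫⁻ ω, (∑' i : ℕ, T k (m+i) ω) ^ μ ∂P ≤
        K * (∫⁻ ω, (ENNReal.ofReal |c (ε 0 ω)|) ^ μ ∂P) ^ m := by
  classical
  set ρ : ℝ≥0∞ := ∫⁻ ω, (ENNReal.ofReal |c (ε 0 ω)|) ^ μ ∂P with hρ_def
  set G : ℝ≥0∞ := ∫⁻ ω, (ENNReal.ofReal |g (ε 0 ω)|) ^ μ ∂P with hG_def
  set b : ℝ≥0∞ := ρ ^ (1/μ) with hb_def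
  have hb1 : b < 1 := ENNReal.rpow_lt_one hρ (by positivity)
  have hTmeas : ∀ k i, Measurable (T k i) := by
    intro k i
    have : Measurable fun ω => ENNReal.ofReal |g (ε (k - (i+1)) ω)| *
        ∏ j ∈ Finset.range i, ENNReal.ofReal |c (ε (k - (j+1)) ω)| := by
      apply Measurable.mul
      · exact ENNReal.measurable_ofReal.comp ((hg.comp (hεmeas _)).abs)
      · exact Finset.measurable_prod _ fun j _ =>
          ENNReal.measurable_ofReal.comp ((hc.comp (hεmeas _)).abs)
    convert this using 1
    funext ω; rw [hT]
  have hTmom : ∀ k i, ∫⁻ ω, (T k i ω) ^ μ ∂P = G * ρ ^ i := by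
    intro k i
    calc ∫⁻ ω, (T k i ω) ^ μ ∂P
        = ∫⁻ ω, ((ENNReal.ofReal |g (ε (k - (i+1)) ω)|) ^ μ *
            ∏ j ∈ Finset.range i, (ENNReal.ofReal |c (ε (k - (j+1)) ω)|) ^ μ) ∂P := by
          apply lintegral_congr; intro ω
          rw [hT, ENNReal.mul_rpow_of_nonneg _ _ hμ.le, aux_prod_rpow _ _ hμ.le]
      _ = G * ρ ^ i := aux_moment P ε c g hc hg hεmeas hindep hident μ k i
  set K0 : ℝ≥0∞ := G * (1 - ρ)⁻¹ + G * ((1 - b)⁻¹) ^ μ with hK0_def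
  have hGne : G ≠ ⊤ := hG.ne
  have hK0ne : K0 ≠ ⊤ := by
    apply ENNReal.add_ne_top.2
    constructor
    · exact ENNReal.mul_ne_top hGne (ENNReal.inv_ne_top.2 (by
        intro h0
        exact absurd (tsub_eq_zero_iff_le.1 h0) (not_le.2 hρ)))
    · refine ENNReal.mul_ne_top hGne (ENNReal.rpow_ne_top_of_nonneg hμ.le
        (ENNReal.inv_ne_top.2 (by
          intro h0
          exact absurd (tsub_eq_zero_iff_le.1 h0) (not_le.2 hb1))))
  have hpowpow : ∀ (n : ℕ), ((ρ : ℝ≥0∞) ^ n) ^ (1/μ) = b ^ n := by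
    intro n
    rw [← ENNReal.rpow_natCast ρ n, ← ENNReal.rpow_mul, mul_comm, ENNReal.rpow_mul,
      ENNReal.rpow_natCast]
  have hbpow : ∀ (n : ℕ), ((b : ℝ≥0∞) ^ n) ^ μ = ρ ^ n := by
    intro n
    rw [← ENNReal.rpow_natCast b n, ← ENNReal.rpow_mul, mul_comm, ENNReal.rpow_mul,
      ENNReal.rpow_natCast, hb_def, ← ENNReal.rpow_mul, one_div,
      inv_mul_cancel₀ hμ.ne', ENNReal.rpow_one]
  have hfin : ∀ (k : ℤ) (m n : ℕ),
      ∫⁻ ω, (∑ i ∈ Finset.range n, T k (m+i) ω) ^ μ ∂P ≤ K0 * ρ ^ m := by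
    intro k m n
    rcases le_or_gt μ 1 with hμ1 | hμ1
    · calc ∫⁻ ω, (∑ i ∈ Finset.range n, T k (m+i) ω) ^ μ ∂P
          ≤ ∫⁻ ω, ∑ i ∈ Finset.range n, (T k (m+i) ω) ^ μ ∂P :=
            lintegral_mono fun ω => aux_sum_rpow_le _ _ hμ hμ1
        _ = ∑ i ∈ Finset.range n, ∫⁻ ω, (T k (m+i) ω) ^ μ ∂P :=
            lintegral_finset_sum _ fun i _ =>
              ENNReal.continuous_rpow_const.measurable.comp (hTmeas k (m+i))
        _ = ∑ i ∈ Finset.range n, G * (ρ ^ m * ρ ^ i) := by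
            refine Finset.sum_congr rfl fun i _ => ?_
            rw [hTmom, pow_add]
        _ = G * ρ ^ m * ∑ i ∈ Finset.range n, ρ ^ i := by
            rw [Finset.mul_sum]
            exact Finset.sum_congr rfl fun i _ => by ring
        _ ≤ G * ρ ^ m * (1 - ρ)⁻¹ :=
            mul_le_mul_right ((ENNReal.sum_le_tsum _).trans_eq (ENNReal.tsum_geometric ρ)) _
        _ ≤ K0 * ρ ^ m := by
            rw [hK0_def]
            calc G * ρ ^ m * (1-ρ)⁻¹ = G * (1-ρ)⁻¹ * ρ ^ m := by ring
              _ ≤ (G * (1-ρ)⁻¹ + G * (1-b)⁻¹ ^ μ) * ρ ^ m := mul_le_mul_left le_self_add _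
    · have hμ1' : (1:ℝ) ≤ μ := hμ1.le
      have hA := aux_minkowski P hμ1' (fun i => T k (m+i)) (fun i => hTmeas k (m+i)) n
      have hRHS : ∑ i ∈ Finset.range n, (∫⁻ ω, T k (m+i) ω ^ μ ∂P) ^ (1/μ)
          ≤ G ^ (1/μ) * b ^ m * (1 - b)⁻¹ := by
        calc ∑ i ∈ Finset.range n, (∫⁻ ω, T k (m+i) ω ^ μ ∂P) ^ (1/μ)
            = ∑ i ∈ Finset.range n, G ^ (1/μ) * (b ^ m * b ^ i) := by
              refine Finset.sum_congr rfl fun i _ => ?_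
              rw [hTmom, ENNReal.mul_rpow_of_nonneg _ _ (by positivity : (0:ℝ) ≤ 1/μ),
                hpowpow, pow_add]
          _ = G ^ (1/μ) * b ^ m * ∑ i ∈ Finset.range n, b ^ i := by
              rw [Finset.mul_sum]
              exact Finset.sum_congr rfl fun i _ => by ring
          _ ≤ G ^ (1/μ) * b ^ m * (1 - b)⁻¹ :=
              mul_le_mul_right ((ENNReal.sum_le_tsum _).trans_eq (ENNReal.tsum_geometric b)) _
      have hAB := hA.trans hRHS
      calc ∫⁻ ω, (∑ i ∈ Finset.range n, T k (m + i) ω) ^ μ ∂P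
          = ((∫⁻ ω, (∑ i ∈ Finset.range n, T k (m + i) ω) ^ μ ∂P) ^ (1/μ)) ^ μ := by
            rw [← ENNReal.rpow_mul, one_div, inv_mul_cancel₀ hμ.ne', ENNReal.rpow_one]
        _ ≤ (G ^ (1/μ) * b ^ m * (1 - b)⁻¹) ^ μ := ENNReal.rpow_le_rpow hAB hμ.le
        _ = G * ρ ^ m * ((1 - b)⁻¹) ^ μ := by
            rw [ENNReal.mul_rpow_of_nonneg _ _ hμ.le, ENNReal.mul_rpow_of_nonneg _ _ hμ.le,
              hbpow, ← ENNReal.rpow_mul, one_div, inv_mul_cancel₀ hμ.ne', ENNReal.rpow_one]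
        _ ≤ K0 * ρ ^ m := by
            rw [hK0_def]
            calc G * ρ ^ m * (1-b)⁻¹ ^ μ = G * (1-b)⁻¹ ^ μ * ρ ^ m := by ring
              _ ≤ (G * (1-ρ)⁻¹ + G * (1-b)⁻¹ ^ μ) * ρ ^ m := mul_le_mul_left le_add_self _
  refine ⟨K0, hK0ne, fun k m => ?_⟩
  have hmeasn : ∀ n : ℕ, Measurable fun ω => (∑ i ∈ Finset.range n, T k (m+i) ω) ^ μ :=
    fun n => ENNReal.continuous_rpow_const.measurable.comp
      (Finset.measurable_sum _ fun i _ => hTmeas k (m+i))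
  have hmono : Monotone fun (n : ℕ) (ω : Ω) => (∑ i ∈ Finset.range n, T k (m+i) ω) ^ μ := by
    intro n1 n2 h ω
    exact ENNReal.rpow_le_rpow
      (Finset.sum_le_sum_of_subset (Finset.range_subset_range.2 h)) hμ.le
  calc ∫⁻ ω, (∑' i : ℕ, T k (m+i) ω) ^ μ ∂P
      = ∫⁻ ω, ⨆ n : ℕ, (∑ i ∈ Finset.range n, T k (m+i) ω) ^ μ ∂P := by
        apply lintegral_congr; intro ω
        have h1 : Tendsto (fun n => ∑ i ∈ Finset.range n, T k (m+i) ω) atTop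
            (nhds (∑' i : ℕ, T k (m+i) ω)) := ENNReal.tendsto_nat_tsum _
        have h2 : Tendsto (fun n => (∑ i ∈ Finset.range n, T k (m+i) ω) ^ μ) atTop
            (nhds ((∑' i : ℕ, T k (m+i) ω) ^ μ)) :=
          (ENNReal.continuous_rpow_const.tendsto _).comp h1
        have h3 : Tendsto (fun n => (∑ i ∈ Finset.range n, T k (m+i) ω) ^ μ) atTop
            (nhds (⨆ n : ℕ, (∑ i ∈ Finset.range n, T k (m+i) ω) ^ μ)) :=
          tendsto_atTop_iSup fun n1 n2 h => hmono h ω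
        exact tendsto_nhds_unique h2 h3
    _ = ⨆ n : ℕ, ∫⁻ ω, (∑ i ∈ Finset.range n, T k (m+i) ω) ^ μ ∂P :=
        lintegral_iSup hmeasn hmono
    _ ≤ K0 * ρ ^ m := iSup_le fun n => hfin k m n

private lemma aux_markov {Ω : Type*} [MeasurableSpace Ω] (P : Measure Ω) {Z : Ω → ℝ≥0∞}
    (hZ : Measurable Z) {μ : ℝ} (hμ : 0 < μ) {t : ℝ} (ht : 0 < t) :
    P {ω | ENNReal.ofReal t ≤ Z ω} ≤ (∫⁻ ω, Z ω ^ μ ∂P) / (ENNReal.ofReal t) ^ μ := by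
  have hset : {ω | ENNReal.ofReal t ≤ Z ω} = {ω | (ENNReal.ofReal t) ^ μ ≤ Z ω ^ μ} := by
    ext ω
    simp only [Set.mem_setOf_eq]
    exact (ENNReal.rpow_le_rpow_iff hμ).symm
  rw [hset]
  refine meas_ge_le_lintegral_div
    (ENNReal.continuous_rpow_const.measurable.comp hZ).aemeasurable ?_ ?_
  · intro h0
    rw [ENNReal.rpow_eq_zero_iff] at h0
    rcases h0 with ⟨h0, _⟩ | ⟨h0, _⟩
    · exact absurd h0 (by simp [ENNReal.ofReal_eq_zero, not_le, ht])
    · exact absurd h0 ENNReal.ofReal_ne_top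
  · exact (ENNReal.rpow_ne_top_of_nonneg hμ.le ENNReal.ofReal_ne_top)

private lemma aux_f_diff (ν : ℝ) (hν : 0 < ν) (f : ℝ → ℝ)
    (hf : (∀ x, f x = |x| ^ ν) ∨ (∀ x, f x = Real.sign x * |x| ^ ν))
    (x y e : ℝ) :
    |f (Real.exp (x/2) * e) - f (Real.exp (y/2) * e)| ≤
      Real.exp (ν * max x y / 2) * (ν/2 * |x - y|) * |e| ^ ν := by
  have hval : ∀ t : ℝ, |Real.exp (t/2) * e| ^ ν = Real.exp (ν * t / 2) * |e| ^ ν := by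
    intro t
    rw [abs_mul, abs_of_pos (Real.exp_pos _),
      Real.mul_rpow (Real.exp_pos _).le (abs_nonneg _), aux_exp_rpow]
    ring_nf
  have hw : (0:ℝ) ≤ |e| ^ ν := Real.rpow_nonneg (abs_nonneg _) _
  have hexp : |Real.exp (ν * x / 2) - Real.exp (ν * y / 2)| ≤
      Real.exp (ν * max x y / 2) * (ν/2 * |x - y|) := by
    have h1 := aux_exp_sub_exp (ν * x / 2) (ν * y / 2)
    have h2 : max (ν * x / 2) (ν * y / 2) = ν * max x y / 2 := by
      have hmono : Monotone fun t : ℝ => ν * t / 2 := fun a b hab => by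
        have := mul_le_mul_of_nonneg_left hab hν.le
        linarith
      exact (hmono.map_max).symm
    have h3 : |ν * x / 2 - ν * y / 2| = ν/2 * |x - y| := by
      rw [show ν * x / 2 - ν * y / 2 = ν/2 * (x - y) by ring, abs_mul,
        abs_of_pos (by positivity : (0:ℝ) < ν/2)]
    rw [h2, h3] at h1
    exact h1
  rcases hf with hf1 | hf2
  · rw [hf1 _, hf1 _, hval, hval, ← sub_mul, abs_mul,
      abs_of_nonneg hw]
    exact mul_le_mul_of_nonneg_right hexp hw
  · rw [hf2 _, hf2 _, hval, hval, aux_sign_mul (Real.exp_pos _),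
      aux_sign_mul (Real.exp_pos _)]
    have heq : Real.sign e * (Real.exp (ν * x / 2) * |e| ^ ν)
        - Real.sign e * (Real.exp (ν * y / 2) * |e| ^ ν)
        = Real.sign e * ((Real.exp (ν * x / 2) - Real.exp (ν * y / 2)) * |e| ^ ν) := by
      ring
    rw [heq, abs_mul, abs_mul, abs_of_nonneg hw]
    calc |Real.sign e| * (|Real.exp (ν * x / 2) - Real.exp (ν * y / 2)| * |e| ^ ν)
        ≤ 1 * (|Real.exp (ν * x / 2) - Real.exp (ν * y / 2)| * |e| ^ ν) :=
          mul_le_mul_of_nonneg_right (aux_abs_sign e) (by positivity)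
      _ = |Real.exp (ν * x / 2) - Real.exp (ν * y / 2)| * |e| ^ ν := one_mul _
      _ ≤ _ := mul_le_mul_of_nonneg_right hexp hw

set_option maxHeartbeats 1000000 in
/-- **Lemma 7.** For an exponential augmented GARCH process, if `−∞ < E log|c(ε₀)| < 0` and,
for some `μ > 0`, `E|c(ε₀)|^μ < 1` and `E|g(ε₀)|^μ < ∞`, then for all sufficiently small
`α > 0` there is `C₈` such that
`P(|η_k − η_{k,m}| > e^{−αm}) ≤ P(|ε₀| ≥ e^{αm}) + C₈ m^{−μ}` for all `k`, `m ≥ 1`. -/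
theorem exponential_garch_eta_tail_rate
    {Ω : Type*} [MeasurableSpace Ω] (P : Measure Ω) [IsProbabilityMeasure P]
    (ε : ℤ → Ω → ℝ) (c g : ℝ → ℝ)
    (hc : Measurable c) (hg : Measurable g)
    (hεmeas : ∀ k, Measurable (ε k))
    (hindep : iIndepFun ε P)
    (hident : ∀ k, IdentDistrib (ε k) (ε 0) P P)
    (hlogint : Integrable (fun ω => Real.log |c (ε 0 ω)|) P)
    (hlogneg : ∫ ω, Real.log |c (ε 0 ω)| ∂P < 0)
    (μ : ℝ) (hμ : 0 < μ)
    (hcmom : ∫⁻ ω, ENNReal.ofReal (|c (ε 0 ω)| ^ μ) ∂P < 1)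
    (hgmom : ∫⁻ ω, ENNReal.ofReal (|g (ε 0 ω)| ^ μ) ∂P < ⊤)
    (ν : ℝ) (hν : 0 < ν)
    (f : ℝ → ℝ)
    (hf : (∀ x, f x = |x| ^ ν) ∨ (∀ x, f x = Real.sign x * |x| ^ ν))
    (X : ℤ → Ω → ℝ) (hXmeas : ∀ k, Measurable (X k))
    (hX : ∀ k : ℤ, ∀ᵐ ω ∂P, Tendsto
      (fun m => ∑ i ∈ Finset.range m,
        g (ε (k - (i + 1)) ω) * ∏ j ∈ Finset.range i, c (ε (k - (j + 1)) ω))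
      atTop (nhds (X k ω)))
    (Xm : ℤ → ℕ → Ω → ℝ)
    (hXm : ∀ k m ω, Xm k m ω = ∑ i ∈ Finset.range m,
      g (ε (k - (i + 1)) ω) * ∏ j ∈ Finset.range i, c (ε (k - (j + 1)) ω))
    (η : ℤ → Ω → ℝ) (hη : ∀ k ω, η k ω = f (Real.exp (X k ω / 2) * ε k ω))
    (ηm : ℤ → ℕ → Ω → ℝ)
    (hηm : ∀ k m ω, ηm k m ω = f (Real.exp (Xm k m ω / 2) * ε k ω)) :
    ∃ α₀ > (0 : ℝ), ∀ α : ℝ, 0 < α → α ≤ α₀ →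
      ∃ C₈ : ℝ, ∀ k : ℤ, ∀ m : ℕ, 1 ≤ m →
        P {ω | |η k ω - ηm k m ω| > Real.exp (-α * m)} ≤
          P {ω | |ε 0 ω| ≥ Real.exp (α * m)} +
            ENNReal.ofReal (C₈ * (m : ℝ) ^ (-μ)) := by
  classical
  -- moment quantities
  set ρ : ℝ≥0∞ := ∫⁻ ω, (ENNReal.ofReal |c (ε 0 ω)|) ^ μ ∂P with hρ_def
  set G : ℝ≥0∞ := ∫⁻ ω, (ENNReal.ofReal |g (ε 0 ω)|) ^ μ ∂P with hG_def
  have hρ1 : ρ < 1 := by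
    rw [hρ_def]
    calc (∫⁻ ω, (ENNReal.ofReal |c (ε 0 ω)|) ^ μ ∂P)
        = ∫⁻ ω, ENNReal.ofReal (|c (ε 0 ω)| ^ μ) ∂P :=
          lintegral_congr fun ω => ENNReal.ofReal_rpow_of_nonneg (abs_nonneg _) hμ.le
      _ < 1 := hcmom
  have hGfin : G < ⊤ := by
    rw [hG_def]
    calc (∫⁻ ω, (ENNReal.ofReal |g (ε 0 ω)|) ^ μ ∂P)
        = ∫⁻ ω, ENNReal.ofReal (|g (ε 0 ω)| ^ μ) ∂P :=
          lintegral_congr fun ω => ENNReal.ofReal_rpow_of_nonneg (abs_nonneg _) hμ.le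
      _ < ⊤ := hgmom
  set T : ℤ → ℕ → Ω → ℝ≥0∞ := fun k i ω => ENNReal.ofReal |g (ε (k - (i+1)) ω)| *
      ∏ j ∈ Finset.range i, ENNReal.ofReal |c (ε (k - (j+1)) ω)| with hT_def
  obtain ⟨K, hKne, hKb⟩ := aux_series_moment P ε c g hc hg hεmeas hindep hident μ hμ T
    (fun k i ω => rfl) hρ1 hGfin
  have hTmeas : ∀ k i, Measurable (T k i) := by
    intro k i
    apply Measurable.mul
    · exact ENNReal.measurable_ofReal.comp ((hg.comp (hεmeas _)).abs)
    · exact Finset.measurable_prod _ fun j _ =>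
        ENNReal.measurable_ofReal.comp ((hc.comp (hεmeas _)).abs)
  -- real constants
  set ρr : ℝ := max ρ.toReal (1/2) with hρr_def
  have hρrpos : 0 < ρr := lt_of_lt_of_le one_half_pos (le_max_right _ _)
  have hρr1 : ρr < 1 := by
    apply max_lt _ one_half_lt_one
    have := ENNReal.toReal_strict_mono (by simp) hρ1
    simpa using this
  have hρne : ρ ≠ ⊤ := (hρ1.trans ENNReal.one_lt_top).ne
  have hρler : ρ ≤ ENNReal.ofReal ρr := by
    rw [← ENNReal.ofReal_toReal hρne]
    exact ENNReal.ofReal_le_ofReal (le_max_left _ _)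
  set L : ℝ := -Real.log ρr / μ with hL_def
  have hL : 0 < L := div_pos (neg_pos.2 (Real.log_neg hρrpos hρr1)) hμ
  have hlogρr : Real.log ρr = -(L * μ) := by
    rw [hL_def]
    field_simp
  set Kr : ℝ := K.toReal + 1 with hKr_def
  have hKrpos : 0 < Kr := by positivity
  have hKler : K ≤ ENNReal.ofReal Kr := by
    rw [← ENNReal.ofReal_toReal hKne]
    exact ENNReal.ofReal_le_ofReal (by linarith)
  refine ⟨L / (4 * (1 + ν)), by positivity, ?_⟩
  intro α hα hα0
  set β : ℝ := L / (2 * ν) with hβ_def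
  have hβpos : 0 < β := by positivity
  set γ : ℝ := 3 * L / 4 with hγ_def
  -- choice of M
  have hM2 : Tendsto (fun m : ℕ => Kr * ((m:ℝ) ^ μ * Real.exp (-(L * μ / 4) * m)))
      atTop (nhds (Kr * 0)) :=
    ((tendsto_rpow_mul_exp_neg_mul_atTop_nhds_zero μ (L*μ/4)
      (by positivity)).comp tendsto_natCast_atTop_atTop).const_mul Kr
  have hM2' : ∀ᶠ m : ℕ in atTop, Kr * ((m:ℝ) ^ μ * Real.exp (-(L * μ / 4) * m)) ≤ 1 :=
    (hM2.eventually_lt_const (by rw [mul_zero]; norm_num)).mono fun m hm => hm.le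
  have hM1 : ∀ᶠ m : ℕ in atTop, Real.log (ν/2) ≤ L/4 * m := by
    have ht : Tendsto (fun m : ℕ => L/4 * (m:ℝ)) atTop atTop :=
      (tendsto_natCast_atTop_atTop (R := ℝ)).const_mul_atTop (by positivity)
    exact ht.eventually_ge_atTop _
  obtain ⟨M0, hM0⟩ := Filter.eventually_atTop.1 (hM1.and hM2')
  set M : ℕ := max M0 1 with hM_def
  set C₈ : ℝ := max ((M:ℝ) ^ μ) (Kr * β ^ (-μ) + 1) with hC8_def
  refine ⟨C₈, ?_⟩
  intro k m hm
  have hm0 : (0:ℝ) < m := by exact_mod_cast hm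
  have hmem : (0:ℝ) ≤ (m:ℝ) ^ (-μ) := Real.rpow_nonneg hm0.le _
  rcases lt_or_ge m M with hmM | hmM
  -- small m
  · have h1le : (1:ℝ≥0∞) ≤ ENNReal.ofReal (C₈ * (m:ℝ) ^ (-μ)) := by
      rw [ENNReal.one_le_ofReal]
      have h1 : (m:ℝ) ^ μ ≤ (M:ℝ) ^ μ :=
        Real.rpow_le_rpow hm0.le (by exact_mod_cast hmM.le) hμ.le
      have h2 : (m:ℝ) ^ μ * (m:ℝ) ^ (-μ) = 1 := by
        rw [← Real.rpow_add hm0]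
        simp
      calc (1:ℝ) = (m:ℝ) ^ μ * (m:ℝ) ^ (-μ) := h2.symm
        _ ≤ (M:ℝ) ^ μ * (m:ℝ) ^ (-μ) := mul_le_mul_of_nonneg_right h1 hmem
        _ ≤ C₈ * (m:ℝ) ^ (-μ) :=
            mul_le_mul_of_nonneg_right (le_max_left _ _) hmem
    calc P {ω | |η k ω - ηm k m ω| > Real.exp (-α * m)} ≤ 1 := prob_le_one
      _ ≤ ENNReal.ofReal (C₈ * (m:ℝ) ^ (-μ)) := h1le
      _ ≤ P {ω | |ε 0 ω| ≥ Real.exp (α * m)} + ENNReal.ofReal (C₈ * (m:ℝ) ^ (-μ)) :=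
          le_add_self
  -- main case : M ≤ m
  · have hmM0 : M0 ≤ m := le_trans (le_max_left _ _) hmM
    obtain ⟨hMi, hMii⟩ := hM0 m hmM0
    set S : Ω → ℝ≥0∞ := fun ω => ∑' i : ℕ, T k i ω with hS_def
    set St : Ω → ℝ≥0∞ := fun ω => ∑' i : ℕ, T k (m+i) ω with hSt_def
    have hSmeas : Measurable S := Measurable.ennreal_tsum fun i => hTmeas k i
    have hStmeas : Measurable St := Measurable.ennreal_tsum fun i => hTmeas k (m+i)
    have hofsum : ∀ (s : Finset ℕ) (ω : Ω),
        ENNReal.ofReal |∑ i ∈ s, g (ε (k - (i+1)) ω) *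
            ∏ j ∈ Finset.range i, c (ε (k - (j+1)) ω)|
          ≤ ∑ i ∈ s, T k i ω := by
      intro s ω
      calc ENNReal.ofReal |∑ i ∈ s, g (ε (k - (i+1)) ω) *
              ∏ j ∈ Finset.range i, c (ε (k - (j+1)) ω)|
          ≤ ENNReal.ofReal (∑ i ∈ s, |g (ε (k - (i+1)) ω) *
              ∏ j ∈ Finset.range i, c (ε (k - (j+1)) ω)|) :=
            ENNReal.ofReal_le_ofReal (Finset.abs_sum_le_sum_abs _ _)
        _ = ∑ i ∈ s, ENNReal.ofReal |g (ε (k - (i+1)) ω) *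
              ∏ j ∈ Finset.range i, c (ε (k - (j+1)) ω)| :=
            ENNReal.ofReal_sum_of_nonneg fun i _ => abs_nonneg _
        _ = ∑ i ∈ s, T k i ω := by
            refine Finset.sum_congr rfl fun i _ => ?_
            rw [abs_mul, Finset.abs_prod, ENNReal.ofReal_mul (abs_nonneg _),
              ENNReal.ofReal_prod_of_nonneg fun j _ => abs_nonneg _]
    have hg1 : ∀ᵐ ω ∂P, ENNReal.ofReal |X k ω| ≤ S ω := by
      filter_upwards [hX k] with ω hconv
      have habs : Tendsto (fun n => ENNReal.ofReal |∑ i ∈ Finset.range n,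
          g (ε (k - (i+1)) ω) * ∏ j ∈ Finset.range i, c (ε (k - (j+1)) ω)|)
          atTop (nhds (ENNReal.ofReal |X k ω|)) :=
        (ENNReal.continuous_ofReal.tendsto _).comp ((continuous_abs.tendsto _).comp hconv)
      refine le_of_tendsto habs (Filter.Eventually.of_forall fun n => ?_)
      exact (hofsum (Finset.range n) ω).trans (ENNReal.sum_le_tsum _)
    have hg2 : ∀ᵐ ω ∂P, ENNReal.ofReal |X k ω - Xm k m ω| ≤ St ω := by
      filter_upwards [hX k] with ω hconv
      have hconv2 := hconv.sub_const (Xm k m ω)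
      have habs : Tendsto (fun n => ENNReal.ofReal |(∑ i ∈ Finset.range n,
          g (ε (k - (i+1)) ω) * ∏ j ∈ Finset.range i, c (ε (k - (j+1)) ω)) - Xm k m ω|)
          atTop (nhds (ENNReal.ofReal |X k ω - Xm k m ω|)) :=
        (ENNReal.continuous_ofReal.tendsto _).comp ((continuous_abs.tendsto _).comp hconv2)
      refine le_of_tendsto habs (Filter.eventually_atTop.2 ⟨m, fun n hn => ?_⟩)
      rw [hXm k m ω, ← Finset.sum_Ico_eq_sub _ hn]
      calc ENNReal.ofReal |∑ i ∈ Finset.Ico m n, g (ε (k - (i+1)) ω) *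
              ∏ j ∈ Finset.range i, c (ε (k - (j+1)) ω)|
          ≤ ∑ i ∈ Finset.Ico m n, T k i ω := hofsum _ ω
        _ = ∑ i ∈ Finset.range (n - m), T k (m+i) ω :=
            Finset.sum_Ico_eq_sum_range (fun i => T k i ω) m n
        _ ≤ St ω := ENNReal.sum_le_tsum _
    have hXmbd : ∀ ω, ENNReal.ofReal |Xm k m ω| ≤ S ω := by
      intro ω
      rw [hXm k m ω]
      exact (hofsum (Finset.range m) ω).trans (ENNReal.sum_le_tsum _)
    -- events
    set A : Set Ω := {ω | Real.exp (α * m) ≤ |ε k ω|} with hA_def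
    set B : Set Ω := {ω | ENNReal.ofReal (β * m) ≤ S ω} with hB_def
    set Cs : Set Ω := {ω | ENNReal.ofReal (Real.exp (-(γ * m))) ≤ St ω} with hCs_def
    -- bound on P A
    have hPA : P A = P {ω | |ε 0 ω| ≥ Real.exp (α * m)} := by
      have hSi : MeasurableSet {x : ℝ | Real.exp (α * m) ≤ |x|} :=
        measurableSet_le measurable_const measurable_abs
      exact (hident k).measure_mem_eq hSi
    -- bound on P B
    have hPB : P B ≤ ENNReal.ofReal (Kr * β ^ (-μ) * (m:ℝ) ^ (-μ)) := by
      have hβm : (0:ℝ) < β * m := by positivity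
      have hSm : ∫⁻ ω, S ω ^ μ ∂P ≤ K := by
        have := hKb k 0
        rw [pow_zero, mul_one] at this
        calc ∫⁻ ω, S ω ^ μ ∂P = ∫⁻ ω, (∑' i : ℕ, T k (0+i) ω) ^ μ ∂P := by
              apply lintegral_congr; intro ω
              rw [hS_def]
              congr 1
              exact tsum_congr fun i => by rw [Nat.zero_add]
          _ ≤ K := this
      calc P B ≤ (∫⁻ ω, S ω ^ μ ∂P) / (ENNReal.ofReal (β * m)) ^ μ :=
            aux_markov P hSmeas hμ hβm
        _ ≤ K / (ENNReal.ofReal (β * m)) ^ μ := ENNReal.div_le_div_right hSm _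
        _ ≤ ENNReal.ofReal Kr / ENNReal.ofReal ((β * m) ^ μ) := by
            rw [ENNReal.ofReal_rpow_of_nonneg hβm.le hμ.le]
            exact ENNReal.div_le_div_right hKler _
        _ = ENNReal.ofReal (Kr / (β * m) ^ μ) :=
            (ENNReal.ofReal_div_of_pos (Real.rpow_pos_of_pos hβm μ)).symm
        _ = ENNReal.ofReal (Kr * β ^ (-μ) * (m:ℝ) ^ (-μ)) := by
            congr 1
            rw [Real.mul_rpow hβpos.le hm0.le, Real.rpow_neg hβpos.le,
              Real.rpow_neg hm0.le, div_eq_mul_inv, mul_inv]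
            ring
    -- bound on P Cs
    have hPC : P Cs ≤ ENNReal.ofReal ((m:ℝ) ^ (-μ)) := by
      have hexpm : (0:ℝ) < Real.exp (-(γ * m)) := Real.exp_pos _
      have hStm : ∫⁻ ω, St ω ^ μ ∂P ≤ K * ρ ^ m := hKb k m
      have hKρ : K * ρ ^ m ≤ ENNReal.ofReal (Kr * ρr ^ m) := by
        rw [ENNReal.ofReal_mul hKrpos.le, ENNReal.ofReal_pow hρrpos.le]
        exact mul_le_mul' hKler (pow_le_pow_left' hρler m)
      calc P Cs ≤ (∫⁻ ω, St ω ^ μ ∂P) / (ENNReal.ofReal (Real.exp (-(γ * m)))) ^ μ :=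
            aux_markov P hStmeas hμ hexpm
        _ ≤ ENNReal.ofReal (Kr * ρr ^ m) / ENNReal.ofReal (Real.exp (-(γ * m) * μ)) := by
            rw [ENNReal.ofReal_rpow_of_nonneg hexpm.le hμ.le, aux_exp_rpow]
            exact ENNReal.div_le_div_right (hStm.trans hKρ) _
        _ = ENNReal.ofReal ((Kr * ρr ^ m) / Real.exp (-(γ * m) * μ)) :=
            (ENNReal.ofReal_div_of_pos (Real.exp_pos _)).symm
        _ = ENNReal.ofReal (Kr * ((m:ℝ) ^ μ * Real.exp (-(L * μ / 4) * m)) / (m:ℝ) ^ μ) := by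
            congr 1
            have hρrm : ρr ^ m = Real.exp ((m:ℝ) * Real.log ρr) := by
              rw [Real.exp_nat_mul, Real.exp_log hρrpos]
            have hmpow : (0:ℝ) < (m:ℝ) ^ μ := Real.rpow_pos_of_pos hm0 μ
            rw [hρrm, div_eq_mul_inv, ← Real.exp_neg, mul_assoc, ← Real.exp_add]
            have hexpeq : (m:ℝ) * Real.log ρr + -(-(γ * m) * μ) = -(L * μ / 4) * m := by
              rw [hlogρr, hγ_def]; ring
            rw [hexpeq]
            field_simp
        _ ≤ ENNReal.ofReal ((m:ℝ) ^ (-μ)) := by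
            apply ENNReal.ofReal_le_ofReal
            have hmpow : (0:ℝ) < (m:ℝ) ^ μ := Real.rpow_pos_of_pos hm0 μ
            rw [Real.rpow_neg hm0.le, div_le_iff₀ hmpow, inv_mul_cancel₀ hmpow.ne']
            exact hMii
    -- event inclusion
    have hincl : ∀ᵐ ω ∂P,
        ω ∈ {ω | |η k ω - ηm k m ω| > Real.exp (-α * m)} → ω ∈ A ∪ B ∪ Cs := by
      filter_upwards [hg1, hg2] with ω h1 h2 hE
      by_contra hnot
      simp only [Set.mem_union, not_or, hA_def, hB_def, hCs_def, Set.mem_setOf_eq,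
        not_le] at hnot
      obtain ⟨⟨hAc, hBc⟩, hCc⟩ := hnot
      have hXb : |X k ω| < β * m := by
        have := lt_of_le_of_lt h1 hBc
        rwa [ENNReal.ofReal_lt_ofReal_iff_of_nonneg (abs_nonneg _)] at this
      have hXmb : |Xm k m ω| < β * m := by
        have := lt_of_le_of_lt (hXmbd ω) hBc
        rwa [ENNReal.ofReal_lt_ofReal_iff_of_nonneg (abs_nonneg _)] at this
      have hdb : |X k ω - Xm k m ω| < Real.exp (-(γ * m)) := by
        have := lt_of_le_of_lt h2 hCc
        rwa [ENNReal.ofReal_lt_ofReal_iff_of_nonneg (abs_nonneg _)] at this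
      have hεb : |ε k ω| < Real.exp (α * m) := hAc
      have hb1 := aux_f_diff ν hν f hf (X k ω) (Xm k m ω) (ε k ω)
      have hE' : Real.exp (-α * m) < |η k ω - ηm k m ω| := hE
      rw [hη, hηm] at hE'
      have hchain : |f (Real.exp (X k ω / 2) * ε k ω) - f (Real.exp (Xm k m ω / 2) * ε k ω)|
          ≤ Real.exp (-α * m) := by
        have hmax : ν * max (X k ω) (Xm k m ω) / 2 ≤ ν * (β * m) / 2 := by
          have h4 : max (X k ω) (Xm k m ω) ≤ β * m :=
            max_le (le_of_lt (lt_of_le_of_lt (le_abs_self _) hXb))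
              (le_of_lt (lt_of_le_of_lt (le_abs_self _) hXmb))
          have := mul_le_mul_of_nonneg_left h4 hν.le
          linarith
        have heν : |ε k ω| ^ ν ≤ Real.exp (α * m * ν) := by
          rw [← aux_exp_rpow]
          exact Real.rpow_le_rpow (abs_nonneg _) hεb.le hν.le
        calc |f (Real.exp (X k ω / 2) * ε k ω) - f (Real.exp (Xm k m ω / 2) * ε k ω)|
            ≤ Real.exp (ν * max (X k ω) (Xm k m ω) / 2)
                * (ν/2 * |X k ω - Xm k m ω|) * |ε k ω| ^ ν := hb1
          _ ≤ Real.exp (ν * (β * m) / 2) * (ν/2 * Real.exp (-(γ * m)))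
                * Real.exp (α * m * ν) := by
              have hq1 : Real.exp (ν * max (X k ω) (Xm k m ω) / 2)
                  ≤ Real.exp (ν * (β * m) / 2) := Real.exp_le_exp.2 hmax
              have hq2 : ν/2 * |X k ω - Xm k m ω| ≤ ν/2 * Real.exp (-(γ * m)) :=
                mul_le_mul_of_nonneg_left hdb.le (by positivity)
              have hq3 : (0:ℝ) ≤ ν/2 * |X k ω - Xm k m ω| := by positivity
              exact mul_le_mul (mul_le_mul hq1 hq2 hq3 (Real.exp_pos _).le)
                heν (Real.rpow_nonneg (abs_nonneg _) _)
                (by positivity)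
          _ = ν/2 * Real.exp (ν * (β * m) / 2 + (-(γ * m)) + α * m * ν) := by
              rw [Real.exp_add, Real.exp_add]; ring
          _ ≤ Real.exp (-α * m) := by
              rw [← Real.exp_log (by positivity : (0:ℝ) < ν/2), ← Real.exp_add]
              apply Real.exp_le_exp.2
              have e1 : ν * (β * m) / 2 = L/4 * m := by
                rw [hβ_def]; field_simp; ring
              have e2 : α * m * ν + α * m = (α * (1+ν)) * m := by ring
              have e3 : α * (1+ν) ≤ L/4 := by
                calc α * (1+ν) ≤ L / (4 * (1 + ν)) * (1+ν) := by
                      apply mul_le_mul_of_nonneg_right hα0 (by positivity)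
                  _ = L/4 := by field_simp
              have e4 : (α * (1+ν)) * m ≤ L/4 * m :=
                mul_le_mul_of_nonneg_right e3 hm0.le
              rw [hγ_def]
              linarith [hMi, e1, e2, e4]
      exact absurd hE' (not_lt.2 hchain)
    -- combine
    have hEsub : P {ω | |η k ω - ηm k m ω| > Real.exp (-α * m)} ≤ P A + (P B + P Cs) := by
      have hbadnull : P {ω | ¬(ω ∈ {ω | |η k ω - ηm k m ω| > Real.exp (-α * m)}
          → ω ∈ A ∪ B ∪ Cs)} = 0 := ae_iff.1 hincl
      calc P {ω | |η k ω - ηm k m ω| > Real.exp (-α * m)}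
          ≤ P ((A ∪ B ∪ Cs) ∪ {ω | ¬(ω ∈ {ω | |η k ω - ηm k m ω| > Real.exp (-α * m)}
              → ω ∈ A ∪ B ∪ Cs)}) := by
            apply measure_mono
            intro ω hω
            by_cases h : ω ∈ A ∪ B ∪ Cs
            · exact Or.inl h
            · exact Or.inr fun himp => h (himp hω)
        _ ≤ P (A ∪ B ∪ Cs) + P {ω | ¬(ω ∈ {ω | |η k ω - ηm k m ω| > Real.exp (-α * m)}
              → ω ∈ A ∪ B ∪ Cs)} := measure_union_le _ _
        _ = P (A ∪ B ∪ Cs) := by rw [hbadnull, add_zero]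
        _ ≤ P (A ∪ B) + P Cs := measure_union_le _ _
        _ ≤ P A + P B + P Cs := add_le_add_left (measure_union_le _ _) _
        _ = P A + (P B + P Cs) := by rw [add_assoc]
    calc P {ω | |η k ω - ηm k m ω| > Real.exp (-α * m)}
        ≤ P A + (P B + P Cs) := hEsub
      _ ≤ P {ω | |ε 0 ω| ≥ Real.exp (α * m)} + ENNReal.ofReal (C₈ * (m:ℝ) ^ (-μ)) := by
          rw [hPA]
          apply add_le_add_right
          calc P B + P Cs
              ≤ ENNReal.ofReal (Kr * β ^ (-μ) * (m:ℝ) ^ (-μ))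
                + ENNReal.ofReal ((m:ℝ) ^ (-μ)) := add_le_add hPB hPC
            _ = ENNReal.ofReal ((Kr * β ^ (-μ) + 1) * (m:ℝ) ^ (-μ)) := by
                rw [← ENNReal.ofReal_add (by positivity) hmem]
                congr 1
                ring
            _ ≤ ENNReal.ofReal (C₈ * (m:ℝ) ^ (-μ)) :=
                ENNReal.ofReal_le_ofReal
                  (mul_le_mul_of_nonneg_right (le_max_right _ _) hmem)
end
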